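/- Let f: ℝ^p → ℝ be L_f-smooth with moduli σ_f, σ_{−f} ∈ [−L_f, L_f] such that f − (σ_f/2)‖·‖² and −f − (σ_{−f}/2)‖·‖² are convex, let g: ℝ^p → ℝ ∪ {∞} be proper, convex and lsc, and let 0 < γ < 1/L_f. Then the DC envelope φ_γ = g^γ − (−f)^γ is differentiable and for all s, s′ ∈ ℝ^p one has (σ_f/(1 − γσ_f))‖s − s′‖² ≤ ⟨∇φ_γ(s) − ∇φ_γ(s′), s − s′⟩ ≤ (1/(γ(1 + γσ_{−f})))‖s − s′‖². -/

import Mathlib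

open scoped InnerProductSpace
open Filter Topology
noncomputable section

/-- `ℝ^p` as a Euclidean space. -/
abbrev Euc (p : ℕ) := EuclideanSpace ℝ (Fin p)

variable {p : ℕ}

/-- `f : ℝ^p → ℝ ∪ {∞}` (modelled with `EReal` values never equal to `-∞`) is proper. -/
def ProperFun (f : Euc p → EReal) : Prop :=
  (∀ x, f x ≠ ⊥) ∧ (∃ x, f x ≠ ⊤)

/-- Convexity for extended-real-valued functions. -/
def ConvexFun (f : Euc p → EReal) : Prop :=
  ∀ x y : Euc p, ∀ t : ℝ, 0 ≤ t → t ≤ 1 →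
    f (t • x + (1 - t) • y) ≤ (t : EReal) * f x + ((1 - t : ℝ) : EReal) * f y

/-- The Moreau envelope `f^γ(x) = inf_w { f(w) + (1/(2γ))‖w − x‖² }`, as an extended real. -/
def moreau (f : Euc p → EReal) (γ : ℝ) (x : Euc p) : EReal :=
  ⨅ w : Euc p, f w + ((1/(2*γ) * ‖w - x‖^2 : ℝ) : EReal)

/-- The (real-valued) Moreau envelope. -/
def moreauR (f : Euc p → EReal) (γ : ℝ) (x : Euc p) : ℝ := (moreau f γ x).toReal

/-- `u` minimizes `w ↦ f(w) + (1/(2γ))‖w − x‖²`. -/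
def ProxObjMin (f : Euc p → EReal) (γ : ℝ) (x u : Euc p) : Prop :=
  ∀ w, f u + ((1/(2*γ) * ‖u - x‖^2 : ℝ) : EReal) ≤ f w + ((1/(2*γ) * ‖w - x‖^2 : ℝ) : EReal)

/-- `u = prox_{γf}(x)`: `u` is the unique minimizer of `w ↦ f(w) + (1/(2γ))‖w − x‖²`. -/
def IsProxOf (f : Euc p → EReal) (γ : ℝ) (x u : Euc p) : Prop :=
  ProxObjMin f γ x u ∧ ∀ w, ProxObjMin f γ x w → w = u

/-- `u` minimizes `w ↦ −f(w) + (1/(2γ))‖w − s‖²` (for real-valued `f`). -/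
def NegProxObjMin (f : Euc p → ℝ) (γ : ℝ) (s u : Euc p) : Prop :=
  ∀ w, -f u + 1/(2*γ) * ‖u - s‖^2 ≤ -f w + 1/(2*γ) * ‖w - s‖^2


lemma hasDerivAt_line (φ : Euc p → ℝ) (φ' : Euc p → Euc p)
    (hφ : ∀ z, HasGradientAt φ (φ' z) z) (x v : Euc p) (t : ℝ) :
    HasDerivAt (fun t : ℝ => φ (x + t • v)) ⟪φ' (x + t • v), v⟫_ℝ t := by
  have hc : HasDerivAt (fun t : ℝ => x + t • v) v t := by
    simpa using ((hasDerivAt_id t).smul_const v).const_add x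
  have h2 := ((hφ (x + t • v)).hasFDerivAt).comp_hasDerivAt t hc
  exact h2

lemma convex_grad_ineq (φ : Euc p → ℝ) (φ' : Euc p → Euc p)
    (hφ : ∀ z, HasGradientAt φ (φ' z) z)
    (hconv : ConvexOn ℝ Set.univ φ) (x y : Euc p) :
    φ x + ⟪φ' x, y - x⟫_ℝ ≤ φ y := by
  set v := y - x with hv
  have hder : HasDerivAt (fun t : ℝ => φ (x + t • v)) ⟪φ' x, v⟫_ℝ 0 := by
    simpa using hasDerivAt_line φ φ' hφ x v 0
  have hslope : ∀ t : ℝ, t ∈ Set.Ioc (0:ℝ) 1 →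
      slope (fun t : ℝ => φ (x + t • v)) 0 t ≤ φ y - φ x := by
    intro t ht
    have h1 : φ (x + t • v) ≤ (1 - t) * φ x + t * φ y := by
      have h2 := hconv.2 (Set.mem_univ x) (Set.mem_univ y) (by linarith [ht.2] : (0:ℝ) ≤ 1 - t)
        (le_of_lt ht.1) (by ring)
      have hxy : (1 - t) • x + t • y = x + t • v := by
        rw [hv]; module
      rwa [hxy] at h2
    rw [slope_def_field]
    simp only [sub_zero, zero_smul, add_zero]
    rw [div_le_iff₀ ht.1]
    nlinarith [ht.1]
  have htend : Tendsto (slope (fun t : ℝ => φ (x + t • v)) 0) (𝓝[>] (0:ℝ))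
      (𝓝 ⟪φ' x, v⟫_ℝ) :=
    (hasDerivAt_iff_tendsto_slope.1 hder).mono_left
      (nhdsWithin_mono 0 (fun z hz => ne_of_gt hz))
  have hev : ∀ᶠ t in 𝓝[>] (0:ℝ),
      slope (fun t : ℝ => φ (x + t • v)) 0 t ≤ φ y - φ x := by
    filter_upwards [Ioc_mem_nhdsGT_of_mem (by norm_num : (0:ℝ) ∈ Set.Ico (0:ℝ) 1)] with t ht
    exact hslope t ht
  have := le_of_tendsto htend hev
  linarith

lemma grad_mono_of_convex (φ : Euc p → ℝ) (φ' : Euc p → Euc p)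
    (hφ : ∀ z, HasGradientAt φ (φ' z) z)
    (hconv : ConvexOn ℝ Set.univ φ) (x y : Euc p) :
    0 ≤ ⟪φ' x - φ' y, x - y⟫_ℝ := by
  have h1 := convex_grad_ineq φ φ' hφ hconv x y
  have h2 := convex_grad_ineq φ φ' hφ hconv y x
  have : ⟪φ' x, y - x⟫_ℝ + ⟪φ' y, x - y⟫_ℝ ≤ 0 := by linarith
  rw [inner_sub_left]
  have e1 : ⟪φ' y, x - y⟫_ℝ = - ⟪φ' y, y - x⟫_ℝ := by
    rw [← inner_neg_right]; congr 1; abel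
  have e2 : ⟪φ' x, x - y⟫_ℝ = - ⟪φ' x, y - x⟫_ℝ := by
    rw [← inner_neg_right]; congr 1; abel
  rw [e2]
  have := e1 ▸ this
  linarith [e1 ▸ this]

lemma convexOn_of_monotone_grad (φ : Euc p → ℝ) (φ' : Euc p → Euc p)
    (hφ : ∀ z, HasGradientAt φ (φ' z) z)
    (hmono : ∀ a b, 0 ≤ ⟪φ' a - φ' b, a - b⟫_ℝ) :
    ConvexOn ℝ Set.univ φ := by
  refine ⟨convex_univ, ?_⟩
  intro x _ y _ a b ha hb hab
  set q : ℝ → ℝ := fun t => φ (y + t • (x - y)) with hq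
  have hder : ∀ t : ℝ, HasDerivAt q ⟪φ' (y + t • (x - y)), x - y⟫_ℝ t :=
    fun t => hasDerivAt_line φ φ' hφ y (x - y) t
  have hdiff : Differentiable ℝ q := fun t => (hder t).differentiableAt
  have hderiv : ∀ t, deriv q t = ⟪φ' (y + t • (x - y)), x - y⟫_ℝ :=
    fun t => (hder t).deriv
  have hmono' : Monotone (deriv q) := by
    intro s t hst
    rcases eq_or_lt_of_le hst with rfl | hlt
    · exact le_rfl
    · rw [hderiv, hderiv]
      have h0 := hmono (y + t • (x - y)) (y + s • (x - y))
      have he : (y + t • (x - y)) - (y + s • (x - y)) = (t - s) • (x - y) := by module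
      rw [he, inner_smul_right] at h0
      have hts : 0 < t - s := by linarith
      rw [inner_sub_left] at h0
      nlinarith [h0]
  have hconvq : ConvexOn ℝ Set.univ q := Monotone.convexOn_univ_of_deriv hdiff hmono'
  simp only [smul_eq_mul]
  have h2 := hconvq.2 (Set.mem_univ (1:ℝ)) (Set.mem_univ (0:ℝ)) ha hb hab
  have e1 : q (a • (1:ℝ) + b • (0:ℝ)) = φ (a • x + b • y) := by
    have : y + (a • (1:ℝ) + b • (0:ℝ)) • (x - y) = a • x + b • y := by
      simp only [smul_eq_mul, mul_one, mul_zero, add_zero]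
      have hb' : b = 1 - a := by linarith
      rw [hb']; module
    rw [hq]; simp only [this]
  have e2 : q 1 = φ x := by simp [hq]
  have e3 : q 0 = φ y := by simp [hq]
  calc φ (a • x + b • y) = q (a • (1:ℝ) + b • (0:ℝ)) := e1.symm
    _ ≤ a * q 1 + b * q 0 := h2
    _ = a * φ x + b * φ y := by rw [e2, e3]

lemma hasGradientAt_const_mul_sq (c : ℝ) (x : Euc p) :
    HasGradientAt (fun z : Euc p => c / 2 * ‖z‖^2) (c • x) x := by
  have hinner : HasFDerivAt (fun z : Euc p => ⟪z, z⟫_ℝ)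
      ((fderivInnerCLM ℝ (x, x)).comp ((ContinuousLinearMap.id ℝ (Euc p)).prod
        (ContinuousLinearMap.id ℝ (Euc p)))) x :=
    (hasFDerivAt_id x).inner ℝ (hasFDerivAt_id x)
  have h2 : HasFDerivAt (fun z : Euc p => c / 2 * ⟪z, z⟫_ℝ)
      ((c/2) • ((fderivInnerCLM ℝ ((x : Euc p), x)).comp ((ContinuousLinearMap.id ℝ (Euc p)).prod
        (ContinuousLinearMap.id ℝ (Euc p))))) x := hinner.const_smul (c/2)
  have he : (fun z : Euc p => c / 2 * ‖z‖^2) = fun z : Euc p => c / 2 * ⟪z, z⟫_ℝ := by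
    funext z; rw [real_inner_self_eq_norm_sq]
  rw [he]
  rw [hasGradientAt_iff_hasFDerivAt]
  refine h2.congr_fderiv ?_
  ext v
  simp [fderivInnerCLM_apply, real_inner_smul_left, real_inner_comm]
  have hsum : ∑ i, v i * x i = ∑ i, x i * v i := Finset.sum_congr rfl (fun i _ => mul_comm _ _)
  ring

lemma hasGradientAt_quad_sub (f : Euc p → ℝ) (f' : Euc p → Euc p)
    (hf : ∀ z, HasGradientAt f (f' z) z) (c : ℝ) (x : Euc p) :
    HasGradientAt (fun z : Euc p => c / 2 * ‖z‖^2 - f z) (c • x - f' x) x := by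
  have h1 := (hasGradientAt_const_mul_sq c x).hasFDerivAt
  have h2 := (hf x).hasFDerivAt
  have h3 := h1.sub h2
  rw [hasGradientAt_iff_hasFDerivAt]
  refine h3.congr_fderiv ?_
  ext v
  simp [inner_sub_left]

lemma convexOn_quad_sub (f : Euc p → ℝ) (f' : Euc p → Euc p)
    (hf : ∀ z, HasGradientAt f (f' z) z) (Lf : ℝ) (hLf : 0 ≤ Lf)
    (hlip : ∀ a b : Euc p, ‖f' a - f' b‖ ≤ Lf * ‖a - b‖) (c : ℝ) (hc : Lf ≤ c) :
    ConvexOn ℝ Set.univ (fun z : Euc p => c / 2 * ‖z‖^2 - f z) := by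
  apply convexOn_of_monotone_grad _ (fun z => c • z - f' z)
    (fun z => hasGradientAt_quad_sub f f' hf c z)
  intro a b
  have h1 : (c • a - f' a) - (c • b - f' b) = c • (a - b) - (f' a - f' b) := by module
  rw [h1, inner_sub_left, real_inner_smul_left, real_inner_self_eq_norm_sq]
  have h2 : ⟪f' a - f' b, a - b⟫_ℝ ≤ Lf * (‖a - b‖ * ‖a - b‖) := by
    calc ⟪f' a - f' b, a - b⟫_ℝ ≤ ‖f' a - f' b‖ * ‖a - b‖ := real_inner_le_norm _ _
      _ ≤ Lf * ‖a - b‖ * ‖a - b‖ := by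
          apply mul_le_mul_of_nonneg_right (hlip a b) (norm_nonneg _)
      _ = Lf * (‖a - b‖ * ‖a - b‖) := by ring
  nlinarith [norm_nonneg (a - b), sq_nonneg ‖a - b‖]

lemma cocoercive (h : Euc p → ℝ) (h' : Euc p → Euc p)
    (hh : ∀ z, HasGradientAt h (h' z) z)
    (hcv : ConvexOn ℝ Set.univ h) (L : ℝ) (hL : 0 < L)
    (hqc : ConvexOn ℝ Set.univ (fun z : Euc p => L / 2 * ‖z‖^2 - h z)) (x y : Euc p) :
    (1/L) * ‖h' x - h' y‖^2 ≤ ⟪h' x - h' y, x - y⟫_ℝ := by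
  -- descent lemma
  have hdes : ∀ a b : Euc p, h b ≤ h a + ⟪h' a, b - a⟫_ℝ + L/2 * ‖b - a‖^2 := by
    intro a b
    have := convex_grad_ineq _ (fun z => L • z - h' z)
      (fun z => hasGradientAt_quad_sub h h' hh L z) hqc a b
    rw [inner_sub_left, real_inner_smul_left] at this
    have hexp : ‖b - a‖^2 = ‖b‖^2 - 2 * ⟪a, b⟫_ℝ + ‖a‖^2 := by
      have h5 := norm_sub_sq_real b a
      rw [real_inner_comm] at h5
      linarith
    have ha2 : ⟪a, b - a⟫_ℝ = ⟪a, b⟫_ℝ - ‖a‖^2 := by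
      rw [inner_sub_right, real_inner_self_eq_norm_sq]
    have h3 : L/2 * ‖b - a‖^2 = L/2 * ‖b‖^2 - L * ⟪a, b⟫_ℝ + L/2 * ‖a‖^2 := by
      rw [hexp]; ring
    have h4 : L * ⟪a, b - a⟫_ℝ = L * ⟪a, b⟫_ℝ - L * ‖a‖^2 := by
      rw [ha2]; ring
    linarith [this, h3, h4]
  -- key inequality
  have key : ∀ a b : Euc p, h a + ⟪h' a, b - a⟫_ℝ + 1/(2*L) * ‖h' b - h' a‖^2 ≤ h b := by
    intro a b
    set e := h' b - h' a with he
    set z := b - (1/L) • e with hz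
    have h1 := convex_grad_ineq h h' hh hcv a z
    have h2 := hdes b z
    have hz1 : z - b = -((1/L) • e) := by rw [hz]; module
    have hz2 : z - a = (b - a) - (1/L) • e := by rw [hz]; module
    rw [hz1] at h2
    rw [hz2] at h1
    rw [inner_neg_right, inner_smul_right] at h2
    rw [inner_sub_right, inner_smul_right] at h1
    have hn : ‖-((1/L) • e)‖^2 = (1/L)^2 * ‖e‖^2 := by
      have hq : ‖-((1/L) • e)‖ = (1/L) * ‖e‖ := by
        rw [norm_neg, norm_smul, Real.norm_eq_abs, abs_of_pos (by positivity : (0:ℝ) < 1/L)]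
      rw [hq]; ring
    rw [hn] at h2
    have hee : ⟪h' b, e⟫_ℝ - ⟪h' a, e⟫_ℝ = ‖e‖^2 := by
      rw [← inner_sub_left, ← he, real_inner_self_eq_norm_sq]
    have hc1 : L/2 * ((1/L)^2 * ‖e‖^2) = 1/(2*L) * ‖e‖^2 := by
      field_simp
    have hqp : 1/L * ⟪h' b, e⟫_ℝ - 1/L * ⟪h' a, e⟫_ℝ = 1/L * ‖e‖^2 := by
      rw [← mul_sub, hee]
    have hhalf : 1/L * ‖e‖^2 = 1/(2*L) * ‖e‖^2 + 1/(2*L) * ‖e‖^2 := by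
      field_simp; ring
    linarith [h1, h2, hc1, hqp, hhalf]
  have k1 := key x y
  have k2 := key y x
  have he1 : ⟪h' x, y - x⟫_ℝ + ⟪h' y, x - y⟫_ℝ = - ⟪h' x - h' y, x - y⟫_ℝ := by
    rw [inner_sub_left]
    have : ⟪h' x, y - x⟫_ℝ = - ⟪h' x, x - y⟫_ℝ := by
      rw [← inner_neg_right]; congr 1; module
    linarith [this]
  have he2 : ‖h' y - h' x‖ = ‖h' x - h' y‖ := by rw [← norm_neg]; congr 1; module
  rw [he2] at k1
  have hX : 1/(2*L) * ‖h' x - h' y‖^2 + 1/(2*L) * ‖h' x - h' y‖^2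
      = 1/L * ‖h' x - h' y‖^2 := by field_simp; ring
  linarith [k1, k2, he1, hX]

lemma hasGradientAt_of_quadratic_bound (m : Euc p → ℝ) (v : Euc p → Euc p) (C : ℝ)
    (hC : 0 ≤ C)
    (hb : ∀ a b : Euc p, |m b - m a - ⟪v a, b - a⟫_ℝ| ≤ C * ‖b - a‖^2) (s : Euc p) :
    HasGradientAt m (v s) s := by
  rw [hasGradientAt_iff_isLittleO]
  rw [Asymptotics.isLittleO_iff]
  intro ε hε
  have hball : Metric.ball s (ε/(C+1)) ∈ nhds s :=
    Metric.ball_mem_nhds s (by positivity)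
  filter_upwards [hball] with b hbmem
  have hd : ‖b - s‖ < ε/(C+1) := by
    rw [Metric.mem_ball, dist_eq_norm] at hbmem; exact hbmem
  have h1 := hb s b
  have h2 : C * ‖b - s‖^2 ≤ ε * ‖b - s‖ := by
    have : C * ‖b - s‖ ≤ ε := by
      rcases le_or_gt (C * ‖b - s‖) ε with h | h
      · exact h
      · exfalso
        have hC1 : C * ‖b - s‖ ≤ (C+1) * ‖b - s‖ := by nlinarith [norm_nonneg (b - s)]
        have : (C+1) * ‖b - s‖ < (C+1) * (ε/(C+1)) := by
          apply mul_lt_mul_of_pos_left hd (by positivity)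
        rw [mul_div_cancel₀] at this
        · linarith
        · positivity
    nlinarith [norm_nonneg (b - s)]
  calc ‖m b - m s - ⟪v s, b - s⟫_ℝ‖ = |m b - m s - ⟪v s, b - s⟫_ℝ| := rfl
    _ ≤ C * ‖b - s‖^2 := h1
    _ ≤ ε * ‖b - s‖ := h2
    _ = ε * ‖b - s‖ := rfl

lemma hasGradientAt_of_env (m : Euc p → ℝ) (v : Euc p → Euc p) (C K : ℝ)
    (hC : 0 ≤ C) (hK : 0 ≤ K)
    (henv : ∀ a b : Euc p, m b - m a ≤ ⟪v a, b - a⟫_ℝ + C * ‖b - a‖^2)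
    (hlip : ∀ a b : Euc p, ‖v a - v b‖ ≤ K * ‖a - b‖) (s : Euc p) :
    HasGradientAt m (v s) s := by
  apply hasGradientAt_of_quadratic_bound m v (C + K) (by linarith)
  intro a b
  rw [abs_le]
  constructor
  · have h1 := henv b a
    have h2 : m b - m a ≥ ⟪v b, b - a⟫_ℝ - C * ‖b - a‖^2 := by
      have e1 : ⟪v b, a - b⟫_ℝ = - ⟪v b, b - a⟫_ℝ := by
        rw [← inner_neg_right]; congr 1; abel
      have e2 : ‖a - b‖ = ‖b - a‖ := by rw [← norm_neg]; congr 1; abel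
      rw [e1, e2] at h1
      linarith
    have h3 : ⟪v b, b - a⟫_ℝ - ⟪v a, b - a⟫_ℝ ≥ - (K * ‖b - a‖^2) := by
      have := real_inner_le_norm (v a - v b) (b - a)
      have h4 : ⟪v a - v b, b - a⟫_ℝ ≤ K * ‖b - a‖^2 := by
        calc ⟪v a - v b, b - a⟫_ℝ ≤ ‖v a - v b‖ * ‖b - a‖ := real_inner_le_norm _ _
          _ ≤ K * ‖a - b‖ * ‖b - a‖ := by
              apply mul_le_mul_of_nonneg_right (hlip a b) (norm_nonneg _)
          _ = K * ‖b - a‖^2 := by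
              have e2 : ‖a - b‖ = ‖b - a‖ := by rw [← norm_neg]; congr 1; abel
              rw [e2]; ring
      rw [inner_sub_left] at h4
      linarith
    nlinarith [h2, h3, sq_nonneg ‖b - a‖]
  · have h1 := henv a b
    nlinarith [h1, sq_nonneg ‖b - a‖]

lemma hasGradientAt_neg (f : Euc p → ℝ) (f' x : Euc p) (hf : HasGradientAt f f' x) :
    HasGradientAt (fun z => -f z) (-f') x := by
  have h := hf.hasFDerivAt.neg
  rw [hasGradientAt_iff_hasFDerivAt]
  refine h.congr_fderiv ?_
  ext v
  simp [inner_neg_left]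

lemma hasGradientAt_sub_quad (f : Euc p → ℝ) (f' : Euc p → Euc p)
    (hf : ∀ z, HasGradientAt f (f' z) z) (c : ℝ) (x : Euc p) :
    HasGradientAt (fun z : Euc p => f z - c / 2 * ‖z‖^2) (f' x - c • x) x := by
  have h := (hasGradientAt_quad_sub f f' hf c x)
  have h2 := hasGradientAt_neg _ _ _ h
  have he : (fun z : Euc p => -(c / 2 * ‖z‖^2 - f z)) = fun z : Euc p => f z - c / 2 * ‖z‖^2 := by
    funext z; ring
  have he2 : -(c • x - f' x) = f' x - c • x := by module
  rw [he, he2] at h2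
  exact h2

lemma sigma_mono (f : Euc p → ℝ) (f' : Euc p → Euc p)
    (hf : ∀ z, HasGradientAt f (f' z) z) (σ : ℝ)
    (hconv : ConvexOn ℝ Set.univ (fun x => f x - σ/2 * ‖x‖^2)) (a b : Euc p) :
    σ * ‖a - b‖^2 ≤ ⟪f' a - f' b, a - b⟫_ℝ := by
  have h := grad_mono_of_convex _ (fun z => f' z - σ • z)
    (fun z => hasGradientAt_sub_quad f f' hf σ z) hconv a b
  have he : (f' a - σ • a) - (f' b - σ • b) = (f' a - f' b) - σ • (a - b) := by module
  rw [he, inner_sub_left, real_inner_smul_left, real_inner_self_eq_norm_sq] at h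
  linarith

lemma hasGradientAt_quad_shift (γ : ℝ) (hγ : 0 < γ) (s u : Euc p) :
    HasGradientAt (fun w : Euc p => 1/(2*γ) * ‖w - s‖^2) (γ⁻¹ • (u - s)) u := by
  have h1 := hasGradientAt_const_mul_sq γ⁻¹ (u - s)
  have h2 : HasFDerivAt (fun w : Euc p => w - s) (ContinuousLinearMap.id ℝ (Euc p)) u :=
    (hasFDerivAt_id u).sub_const s
  have h3 := h1.hasFDerivAt.comp u h2
  rw [hasGradientAt_iff_hasFDerivAt]
  have he : (fun w : Euc p => 1/(2*γ) * ‖w - s‖^2)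
      = (fun z : Euc p => γ⁻¹ / 2 * ‖z‖^2) ∘ (fun w => w - s) := by
    funext w
    simp only [Function.comp]
    rw [one_div]
    ring
  rw [he]
  exact h3

lemma negprox_fixed (f : Euc p → ℝ) (f' : Euc p → Euc p)
    (hf : ∀ z, HasGradientAt f (f' z) z) (γ : ℝ) (hγ : 0 < γ) (s u : Euc p)
    (hmin : NegProxObjMin f γ s u) : u = s + γ • f' u := by
  have hg1 : HasGradientAt (fun w : Euc p => -f w + 1/(2*γ) * ‖w - s‖^2)
      (-f' u + γ⁻¹ • (u - s)) u := by
    have ha := (hasGradientAt_neg f (f' u) u (hf u)).hasFDerivAt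
    have hb := (hasGradientAt_quad_shift γ hγ s u).hasFDerivAt
    have hc := ha.add hb
    rw [hasGradientAt_iff_hasFDerivAt]
    refine hc.congr_fderiv ?_
    ext v
    simp [inner_add_left]
  have hlm : IsLocalMin (fun w : Euc p => -f w + 1/(2*γ) * ‖w - s‖^2) u :=
    Filter.Eventually.of_forall hmin
  have hz := hlm.hasFDerivAt_eq_zero hg1.hasFDerivAt
  have hz2 : -f' u + γ⁻¹ • (u - s) = 0 := by
    have := congrArg (fun (L : Euc p →L[ℝ] ℝ) => (InnerProductSpace.toDual ℝ (Euc p)).symm L) hz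
    simpa using this
  have : γ⁻¹ • (u - s) = f' u := by
    have h := hz2
    rw [add_comm] at h
    have := eq_neg_of_add_eq_zero_left h
    simpa using this
  have h2 : u - s = γ • f' u := by
    rw [← this, smul_smul]
    rw [mul_inv_cancel₀ (ne_of_gt hγ), one_smul]
  rw [← h2]; module

lemma prox_g_val (g : Euc p → EReal) (hp : ProperFun g) (γ : ℝ) (s x : Euc p)
    (hmin : ProxObjMin g γ s x) :
    ∃ G : ℝ, g x = (G : EReal) := by
  obtain ⟨x0, hx0⟩ := hp.2
  have hne_bot := hp.1 x
  have hne_top : g x ≠ ⊤ := by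
    intro htop
    have h := hmin x0
    rw [htop] at h
    have hlhs : (⊤ : EReal) + ((1/(2*γ) * ‖x - s‖^2 : ℝ) : EReal) = ⊤ :=
      EReal.top_add_of_ne_bot (EReal.coe_ne_bot _)
    rw [hlhs] at h
    have hrhs : g x0 + ((1/(2*γ) * ‖x0 - s‖^2 : ℝ) : EReal) < ⊤ :=
      EReal.add_lt_top hx0 (EReal.coe_ne_top _)
    exact (ne_of_lt hrhs) (top_le_iff.1 h)
  exact ⟨(g x).toReal, (EReal.coe_toReal hne_top hne_bot).symm⟩

lemma moreau_eq_of_min (g : Euc p → EReal) (γ : ℝ) (s x : Euc p)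
    (hmin : ProxObjMin g γ s x) :
    moreau g γ s = g x + ((1/(2*γ) * ‖x - s‖^2 : ℝ) : EReal) :=
  le_antisymm (iInf_le _ x) (le_iInf hmin)

lemma moreauR_eq_of_min (g : Euc p → EReal) (γ : ℝ) (s x : Euc p) (G : ℝ)
    (hG : g x = (G : EReal)) (hmin : ProxObjMin g γ s x) :
    moreauR g γ s = G + 1/(2*γ) * ‖x - s‖^2 := by
  rw [moreauR, moreau_eq_of_min g γ s x hmin, hG, ← EReal.coe_add, EReal.toReal_coe]

lemma nonneg_of_small_t (A B : ℝ) (hB0 : 0 ≤ B)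
    (key : ∀ t : ℝ, 0 < t → t ≤ 1 → 0 ≤ A + t * B) : 0 ≤ A := by
  by_contra hneg
  push_neg at hneg
  rcases eq_or_lt_of_le hB0 with hB0' | hBpos
  · have h := key 1 one_pos le_rfl
    rw [← hB0'] at h
    linarith
  · have ht0pos : 0 < min 1 (-A / (2 * B)) :=
      lt_min one_pos (div_pos (by linarith) (by linarith))
    have h := key _ ht0pos (min_le_left _ _)
    have htB : min 1 (-A / (2 * B)) * B ≤ -A / 2 := by
      have h1 : min 1 (-A / (2 * B)) ≤ -A / (2 * B) := min_le_right _ _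
      calc min 1 (-A / (2 * B)) * B ≤ (-A / (2 * B)) * B :=
            mul_le_mul_of_nonneg_right h1 hB0
        _ = -A / 2 := by field_simp
    linarith

lemma prox_subgrad (g : Euc p → EReal) (hgc : ConvexFun g) (γ : ℝ) (hγ : 0 < γ)
    (s x : Euc p) (hmin : ProxObjMin g γ s x) (G : ℝ) (hG : g x = (G : EReal))
    (w : Euc p) (W : ℝ) (hW : g w = (W : EReal)) :
    G + γ⁻¹ * ⟪s - x, w - x⟫_ℝ ≤ W := by
  have key : ∀ t : ℝ, 0 < t → t ≤ 1 →
      0 ≤ (W - G) + γ⁻¹ * ⟪x - s, w - x⟫_ℝ + t * (1/(2*γ) * ‖w - x‖^2) := by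
    intro t ht0 ht1
    have hconv := hgc w x t (le_of_lt ht0) ht1
    rw [hW, hG, ← EReal.coe_mul, ← EReal.coe_mul, ← EReal.coe_add] at hconv
    have hminwt := hmin (t • w + (1 - t) • x)
    rw [hG, ← EReal.coe_add] at hminwt
    have hchain : ((G + 1/(2*γ) * ‖x - s‖^2 : ℝ) : EReal)
        ≤ ((t * W + (1 - t) * G + 1/(2*γ) * ‖t • w + (1 - t) • x - s‖^2 : ℝ) : EReal) := by
      calc ((G + 1/(2*γ) * ‖x - s‖^2 : ℝ) : EReal)
          ≤ g (t • w + (1 - t) • x) + ((1/(2*γ) * ‖t • w + (1 - t) • x - s‖^2 : ℝ) : EReal) :=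
            hminwt
        _ ≤ ((t * W + (1 - t) * G : ℝ) : EReal)
              + ((1/(2*γ) * ‖t • w + (1 - t) • x - s‖^2 : ℝ) : EReal) :=
            add_le_add_left hconv _
        _ = _ := by rw [← EReal.coe_add]
    rw [EReal.coe_le_coe_iff] at hchain
    have hexp : ‖t • w + (1 - t) • x - s‖^2
        = ‖x - s‖^2 + 2 * t * ⟪x - s, w - x⟫_ℝ + t^2 * ‖w - x‖^2 := by
      have he : t • w + (1 - t) • x - s = (x - s) + t • (w - x) := by module
      rw [he, norm_add_sq_real, inner_smul_right, norm_smul, Real.norm_eq_abs]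
      have : |t|^2 = t^2 := sq_abs t
      nlinarith [this]
    rw [hexp] at hchain
    have h2γ : 0 < 1/(2*γ) := by positivity
    -- from hchain : G + c‖x-s‖² ≤ tW + (1-t)G + c(‖x-s‖² + 2t⟪⟫ + t²‖w-x‖²)
    have h3 : 0 ≤ t * (W - G) + 1/(2*γ) * (2 * t * ⟪x - s, w - x⟫_ℝ)
        + 1/(2*γ) * (t^2 * ‖w - x‖^2) := by nlinarith [hchain]
    have h4 : 1/(2*γ) * (2 * t * ⟪x - s, w - x⟫_ℝ) = t * (γ⁻¹ * ⟪x - s, w - x⟫_ℝ) := by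
      rw [one_div]; field_simp
    have h5 : 1/(2*γ) * (t^2 * ‖w - x‖^2) = t * (t * (1/(2*γ) * ‖w - x‖^2)) := by ring
    rw [h4, h5] at h3
    have h6 : 0 ≤ t * ((W - G) + γ⁻¹ * ⟪x - s, w - x⟫_ℝ + t * (1/(2*γ) * ‖w - x‖^2)) := by
      nlinarith [h3]
    nlinarith [h6, ht0]
  -- pass to the limit t → 0⁺
  have hA0 : 0 ≤ (W - G) + γ⁻¹ * ⟪x - s, w - x⟫_ℝ :=
    nonneg_of_small_t _ _ (by positivity) key
  have hinner : γ⁻¹ * ⟪s - x, w - x⟫_ℝ = - (γ⁻¹ * ⟪x - s, w - x⟫_ℝ) := by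
    have : (s - x : Euc p) = -(x - s) := by module
    rw [this, inner_neg_left]; ring
  rw [hinner]
  linarith [hA0]

lemma hasGradientAt_sub' (f g : Euc p → ℝ) (f' g' x : Euc p)
    (hf : HasGradientAt f f' x) (hg : HasGradientAt g g' x) :
    HasGradientAt (fun z => f z - g z) (f' - g') x := by
  have h := hf.hasFDerivAt.sub hg.hasFDerivAt
  rw [hasGradientAt_iff_hasFDerivAt]
  refine h.congr_fderiv ?_
  ext v
  simp [inner_sub_left]

lemma bounds_core (γ σf σnf Lf : ℝ) (hγ : 0 < γ) (hLf : 0 ≤ Lf)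
    (hσf : |σf| ≤ Lf) (hσnf : |σnf| ≤ Lf) (hγL : γ * Lf < 1)
    (Δ P d e : Euc p)
    (hP0 : 0 ≤ ⟪P, Δ⟫_ℝ) (hPle : ⟪P, Δ⟫_ℝ ≤ ‖Δ‖^2)
    (hd : d = Δ + γ • e)
    (hmnf : σnf * ‖d‖^2 ≤ -⟪e, d⟫_ℝ)
    (hco : (1/(γ⁻¹ - σf)) * ‖e - σf • d‖^2 ≤ ⟪e - σf • d, d⟫_ℝ) :
    σf/(1 - γ * σf) * ‖Δ‖^2 ≤ γ⁻¹ * (⟪d, Δ⟫_ℝ - ⟪P, Δ⟫_ℝ) ∧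
      γ⁻¹ * (⟪d, Δ⟫_ℝ - ⟪P, Δ⟫_ℝ) ≤ 1/(γ * (1 + γ * σnf)) * ‖Δ‖^2 := by
  have hγ0 : (0:ℝ) < γ⁻¹ := by positivity
  have hγne : γ ≠ 0 := ne_of_gt hγ
  have hσfLf : σf ≤ Lf := le_trans (le_abs_self _) hσf
  have hσnfLf : -Lf ≤ σnf := neg_le_of_abs_le hσnf
  have h1γσ : 0 < 1 - γ * σf := by nlinarith [mul_le_mul_of_nonneg_left hσfLf (le_of_lt hγ)]
  have hβ : 0 < 1 + γ * σnf := by nlinarith [mul_le_mul_of_nonneg_left hσnfLf (le_of_lt hγ)]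
  have hL : 0 < γ⁻¹ - σf := by
    have : Lf < γ⁻¹ := by
      rw [← one_div, lt_div_iff₀ hγ]; linarith [mul_comm γ Lf ▸ hγL]
    linarith
  have hLne : γ⁻¹ - σf ≠ 0 := ne_of_gt hL
  -- basic expansions
  have hdΔ : ⟪d, Δ⟫_ℝ = ‖Δ‖^2 + γ * ⟪e, Δ⟫_ℝ := by
    rw [hd, inner_add_left, real_inner_smul_left, real_inner_self_eq_norm_sq]
  have hΔd : Δ = d - γ • e := by rw [hd]; module
  have hed : ⟪e, Δ⟫_ℝ = ⟪e, d⟫_ℝ - γ * ‖e‖^2 := by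
    rw [hΔd, inner_sub_right, inner_smul_right, real_inner_self_eq_norm_sq]
  constructor
  · -- lower bound
    have hIeq : γ⁻¹ * (⟪d, Δ⟫_ℝ - ⟪P, Δ⟫_ℝ)
        = γ⁻¹ * (‖Δ‖^2 - ⟪P, Δ⟫_ℝ) + ⟪e, Δ⟫_ℝ := by
      rw [hdΔ]; field_simp; ring
    have hIlow : ⟪e, Δ⟫_ℝ ≤ γ⁻¹ * (⟪d, Δ⟫_ℝ - ⟪P, Δ⟫_ℝ) := by
      have h0 : 0 ≤ γ⁻¹ * (‖Δ‖^2 - ⟪P, Δ⟫_ℝ) :=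
        mul_nonneg (le_of_lt hγ0) (by linarith)
      linarith [hIeq]
    -- show σf/(1-γσf) ‖Δ‖² ≤ ⟪e,Δ⟫
    have hebarΔ : ⟪e - σf • d, Δ⟫_ℝ = (1 - γ * σf) * ⟪e, Δ⟫_ℝ - σf * ‖Δ‖^2 := by
      rw [inner_sub_left, real_inner_smul_left, hdΔ]
      ring
    have hebard : ⟪e - σf • d, Δ⟫_ℝ
        = (1 - γ * σf) * ⟪e - σf • d, d⟫_ℝ - γ * ‖e - σf • d‖^2 := by
      have h1 : ⟪e - σf • d, Δ⟫_ℝ = ⟪e - σf • d, d⟫_ℝ - γ * ⟪e - σf • d, e⟫_ℝ := by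
        rw [hΔd, inner_sub_right, inner_smul_right]
      have h2 : ⟪e - σf • d, e⟫_ℝ = ‖e‖^2 - σf * ⟪d, e⟫_ℝ := by
        rw [inner_sub_left, real_inner_smul_left, real_inner_self_eq_norm_sq]
      have h3 : ⟪e - σf • d, d⟫_ℝ = ⟪e, d⟫_ℝ - σf * ‖d‖^2 := by
        rw [inner_sub_left, real_inner_smul_left, real_inner_self_eq_norm_sq]
      have h4 : ‖e - σf • d‖^2 = ‖e‖^2 - 2 * (σf * ⟪e, d⟫_ℝ) + σf^2 * ‖d‖^2 := by
        rw [norm_sub_sq_real, inner_smul_right, norm_smul, Real.norm_eq_abs,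
          mul_pow, sq_abs]
      rw [h1, h2, h3, h4, real_inner_comm d e]
      ring
    have h5a := mul_le_mul_of_nonneg_left hco (le_of_lt h1γσ)
    have h5b : (1 - γ * σf) * ((1/(γ⁻¹ - σf)) * ‖e - σf • d‖^2) = γ * ‖e - σf • d‖^2 := by
      field_simp
    have h6 : 0 ≤ ⟪e - σf • d, Δ⟫_ℝ := by
      rw [hebard]; linarith [h5a, h5b]
    have h7 : σf * ‖Δ‖^2 ≤ (1 - γ * σf) * ⟪e, Δ⟫_ℝ := by
      rw [hebarΔ] at h6; linarith
    have h8 : σf/(1 - γ * σf) * ‖Δ‖^2 ≤ ⟪e, Δ⟫_ℝ := by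
      rw [div_mul_eq_mul_div, div_le_iff₀ h1γσ]
      linarith [h7]
    linarith [hIlow, h8]
  · -- upper bound
    have hadown : (1 + γ * σnf) * ‖d‖^2 ≤ ⟪d, Δ⟫_ℝ := by
      have h1 : ⟪d, Δ⟫_ℝ = ‖d‖^2 - γ * ⟪e, d⟫_ℝ := by
        rw [hΔd, inner_sub_right, inner_smul_right, real_inner_self_eq_norm_sq,
          real_inner_comm d e]
      have h2 := mul_le_mul_of_nonneg_left hmnf (le_of_lt hγ)
      nlinarith [h1, h2]
    have haup : ⟪d, Δ⟫_ℝ ≤ ‖d‖ * ‖Δ‖ := real_inner_le_norm _ _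
    have hc : 0 < γ * (1 + γ * σnf) := mul_pos hγ hβ
    rcases le_or_gt ⟪d, Δ⟫_ℝ 0 with ha | ha
    · have hI : γ⁻¹ * (⟪d, Δ⟫_ℝ - ⟪P, Δ⟫_ℝ) ≤ 0 :=
        mul_nonpos_of_nonneg_of_nonpos (le_of_lt hγ0) (by linarith)
      have hR : 0 ≤ 1/(γ * (1 + γ * σnf)) * ‖Δ‖^2 :=
        mul_nonneg (one_div_nonneg.2 (le_of_lt hc)) (pow_nonneg (norm_nonneg _) 2)
      linarith
    · have hsq : ⟪d, Δ⟫_ℝ * ⟪d, Δ⟫_ℝ ≤ (‖d‖ * ‖Δ‖) * (‖d‖ * ‖Δ‖) :=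
        mul_le_mul haup haup (le_of_lt ha) (mul_nonneg (norm_nonneg _) (norm_nonneg _))
      have h6 : (1 + γ * σnf) * (‖d‖^2) * ‖Δ‖^2 ≤ ⟪d, Δ⟫_ℝ * ‖Δ‖^2 :=
        mul_le_mul_of_nonneg_right hadown (pow_nonneg (norm_nonneg _) 2)
      have hsq' : (1 + γ * σnf) * (⟪d, Δ⟫_ℝ * ⟪d, Δ⟫_ℝ)
          ≤ (1 + γ * σnf) * ((‖d‖ * ‖Δ‖) * (‖d‖ * ‖Δ‖)) :=
        mul_le_mul_of_nonneg_left hsq (le_of_lt hβ)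
      have heq2 : (1 + γ * σnf) * ((‖d‖ * ‖Δ‖) * (‖d‖ * ‖Δ‖))
          = (1 + γ * σnf) * (‖d‖^2) * ‖Δ‖^2 := by ring
      have h7 : (1 + γ * σnf) * ⟪d, Δ⟫_ℝ * ⟪d, Δ⟫_ℝ ≤ ‖Δ‖^2 * ⟪d, Δ⟫_ℝ := by
        rw [heq2] at hsq'
        linarith [hsq', h6]
      have h8 : (1 + γ * σnf) * ⟪d, Δ⟫_ℝ ≤ ‖Δ‖^2 := le_of_mul_le_mul_right h7 ha
      have h9 : γ⁻¹ * (⟪d, Δ⟫_ℝ - ⟪P, Δ⟫_ℝ) ≤ γ⁻¹ * ⟪d, Δ⟫_ℝ :=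
        mul_le_mul_of_nonneg_left (by linarith) (le_of_lt hγ0)
      have h10 : γ⁻¹ * ⟪d, Δ⟫_ℝ = ((1 + γ * σnf) * ⟪d, Δ⟫_ℝ) * (1/(γ * (1 + γ * σnf))) := by
        field_simp
      have h11 : ((1 + γ * σnf) * ⟪d, Δ⟫_ℝ) * (1/(γ * (1 + γ * σnf)))
          ≤ ‖Δ‖^2 * (1/(γ * (1 + γ * σnf))) :=
        mul_le_mul_of_nonneg_right h8 (one_div_nonneg.2 (le_of_lt hc))
      calc γ⁻¹ * (⟪d, Δ⟫_ℝ - ⟪P, Δ⟫_ℝ) ≤ γ⁻¹ * ⟪d, Δ⟫_ℝ := h9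
        _ = ((1 + γ * σnf) * ⟪d, Δ⟫_ℝ) * (1/(γ * (1 + γ * σnf))) := h10
        _ ≤ ‖Δ‖^2 * (1/(γ * (1 + γ * σnf))) := h11
        _ = 1/(γ * (1 + γ * σnf)) * ‖Δ‖^2 := by ring

/-- for `L_f`-smooth `f` with hypoconvexity moduli `σ_f, σ_{−f} ∈ [−L_f, L_f]`,
proper convex lsc `g` and `0 < γ < 1/L_f`, the DC envelope `φ_γ = g^γ − (−f)^γ` is
differentiable with gradient `∇φ_γ = (1/γ)(prox_{−γf} − prox_{γg})` and for all `s, s′`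
`(σ_f/(1 − γσ_f))‖s − s′‖² ≤ ⟨∇φ_γ(s) − ∇φ_γ(s′), s − s′⟩ ≤ (1/(γ(1 + γσ_{−f})))‖s − s′‖²`. -/
theorem statement10
    (f : Euc p → ℝ) (f' : Euc p → Euc p)
    (hf : ∀ x, HasGradientAt f (f' x) x)
    (Lf : ℝ) (hLf : 0 ≤ Lf) (hlip : LipschitzWith (Real.toNNReal Lf) f')
    (σf σnf : ℝ) (hσf : |σf| ≤ Lf) (hσnf : |σnf| ≤ Lf)
    (hconvf : ConvexOn ℝ Set.univ (fun x => f x - σf/2 * ‖x‖^2))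
    (hconvnf : ConvexOn ℝ Set.univ (fun x => -f x - σnf/2 * ‖x‖^2))
    (g : Euc p → EReal)
    (hg_proper : ProperFun g) (hg_convex : ConvexFun g) (hg_lsc : LowerSemicontinuous g)
    (γ : ℝ) (hγ : 0 < γ) (hγL : γ * Lf < 1)
    (proxg : Euc p → Euc p) (hproxg : ∀ s, IsProxOf g γ s (proxg s))
    (proxnf : Euc p → Euc p)
    (hproxnf : ∀ s, NegProxObjMin f γ s (proxnf s) ∧
      ∀ w, NegProxObjMin f γ s w → w = proxnf s) :
    (∀ s : Euc p,
        HasGradientAt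
          (fun s' => moreauR g γ s' - moreauR (fun x => ((-f x : ℝ) : EReal)) γ s')
          (γ⁻¹ • (proxnf s - proxg s)) s) ∧
      (∀ s s' : Euc p,
        σf/(1 - γ * σf) * ‖s - s'‖^2 ≤
            ⟪γ⁻¹ • (proxnf s - proxg s) - γ⁻¹ • (proxnf s' - proxg s'), s - s'⟫_ℝ ∧
          ⟪γ⁻¹ • (proxnf s - proxg s) - γ⁻¹ • (proxnf s' - proxg s'), s - s'⟫_ℝ ≤
            1/(γ * (1 + γ * σnf)) * ‖s - s'‖^2) := by
  have hγ0 : (0:ℝ) < γ⁻¹ := by positivity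
  have hγLf1 : γ * Lf < 1 := hγL
  have h1γ : Lf < γ⁻¹ := by
    rw [← one_div]
    rw [lt_div_iff₀ hγ]
    linarith [mul_comm γ Lf ▸ hγL]
  have hlipR : ∀ a b : Euc p, ‖f' a - f' b‖ ≤ Lf * ‖a - b‖ := by
    intro a b
    have h := hlip.dist_le_mul a b
    rw [dist_eq_norm, dist_eq_norm, Real.coe_toNNReal _ hLf] at h
    exact h
  -- prox-g data
  have hGex : ∀ s, ∃ G : ℝ, g (proxg s) = (G : EReal) :=
    fun s => prox_g_val g hg_proper γ s _ (hproxg s).1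
  choose G hG using hGex
  have hMg : ∀ s, moreauR g γ s = G s + 1/(2*γ) * ‖proxg s - s‖^2 :=
    fun s => moreauR_eq_of_min g γ s _ (G s) (hG s) (hproxg s).1
  have hsub : ∀ s s', G s + γ⁻¹ * ⟪s - proxg s, proxg s' - proxg s⟫_ℝ ≤ G s' :=
    fun s s' => prox_subgrad g hg_convex γ hγ s _ (hproxg s).1 _ (hG s) _ _ (hG s')
  have hfirm : ∀ s s', ‖proxg s - proxg s'‖^2 ≤ ⟪proxg s - proxg s', s - s'⟫_ℝ := by
    intro a b
    have h1 := hsub a b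
    have h2 := hsub b a
    have hsum : γ⁻¹ * ⟪a - proxg a, proxg b - proxg a⟫_ℝ
        + γ⁻¹ * ⟪b - proxg b, proxg a - proxg b⟫_ℝ ≤ 0 := by linarith
    have hsum2 : ⟪a - proxg a, proxg b - proxg a⟫_ℝ
        + ⟪b - proxg b, proxg a - proxg b⟫_ℝ ≤ 0 := by
      by_contra hc
      push_neg at hc
      nlinarith [mul_pos hγ0 hc]
    have hB : ⟪b - proxg b, proxg a - proxg b⟫_ℝ
        = -⟪b - proxg b, proxg b - proxg a⟫_ℝ := by
      rw [← inner_neg_right]; congr 1; module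
    have hA2 : ⟪a - proxg a, proxg b - proxg a⟫_ℝ - ⟪b - proxg b, proxg b - proxg a⟫_ℝ
        = ⟪(a - b) - (proxg a - proxg b), proxg b - proxg a⟫_ℝ := by
      rw [← inner_sub_left]; congr 1; module
    have hA3 : ⟪(a - b) - (proxg a - proxg b), proxg b - proxg a⟫_ℝ
        = -⟪(a - b) - (proxg a - proxg b), proxg a - proxg b⟫_ℝ := by
      rw [← inner_neg_right]; congr 1; module
    have hA4 : ⟪(a - b) - (proxg a - proxg b), proxg a - proxg b⟫_ℝ
        = ⟪a - b, proxg a - proxg b⟫_ℝ - ‖proxg a - proxg b‖^2 := by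
      rw [inner_sub_left, real_inner_self_eq_norm_sq]
    have hcomm : ⟪a - b, proxg a - proxg b⟫_ℝ = ⟪proxg a - proxg b, a - b⟫_ℝ :=
      real_inner_comm _ _
    linarith
  have hnonexp : ∀ s s', ‖proxg s - proxg s'‖ ≤ ‖s - s'‖ := by
    intro a b
    rcases (norm_nonneg (proxg a - proxg b)).eq_or_lt with h0 | hpos
    · rw [← h0]; exact norm_nonneg _
    · have h2 := real_inner_le_norm (proxg a - proxg b) (a - b)
      have h3 : ‖proxg a - proxg b‖ * ‖proxg a - proxg b‖
          ≤ ‖a - b‖ * ‖proxg a - proxg b‖ := by nlinarith [hfirm a b]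
      exact le_of_mul_le_mul_right h3 hpos
  have hxle : ∀ s s', ⟪proxg s - proxg s', s - s'⟫_ℝ ≤ ‖s - s'‖^2 := by
    intro a b
    have h2 := real_inner_le_norm (proxg a - proxg b) (a - b)
    have h3 := hnonexp a b
    nlinarith [norm_nonneg (a - b)]
  -- prox-nf data
  have hfix : ∀ s, proxnf s = s + γ • f' (proxnf s) :=
    fun s => negprox_fixed f f' hf γ hγ s _ (hproxnf s).1
  have hnfmin : ∀ s, ProxObjMin (fun x => ((-f x : ℝ) : EReal)) γ s (proxnf s) := by
    intro s w
    rw [← EReal.coe_add, ← EReal.coe_add, EReal.coe_le_coe_iff]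
    exact (hproxnf s).1 w
  have hMnf : ∀ s, moreauR (fun x => ((-f x : ℝ) : EReal)) γ s
      = -f (proxnf s) + 1/(2*γ) * ‖proxnf s - s‖^2 :=
    fun s => moreauR_eq_of_min _ γ s _ _ rfl (hnfmin s)
  have hdshift : ∀ s s', proxnf s - proxnf s'
      = (s - s') + γ • (f' (proxnf s) - f' (proxnf s')) := by
    intro a b
    conv_lhs => rw [hfix a, hfix b]
    module
  have hdbound : ∀ s s', (1 - γ * Lf) * ‖proxnf s - proxnf s'‖ ≤ ‖s - s'‖ := by
    intro a b
    have hd := hdshift a b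
    have h1 : ‖proxnf a - proxnf b‖ ≤ ‖a - b‖ + γ * (Lf * ‖proxnf a - proxnf b‖) := by
      nth_rewrite 1 [hd]
      calc ‖(a - b) + γ • (f' (proxnf a) - f' (proxnf b))‖
          ≤ ‖a - b‖ + ‖γ • (f' (proxnf a) - f' (proxnf b))‖ := norm_add_le _ _
        _ = ‖a - b‖ + γ * ‖f' (proxnf a) - f' (proxnf b)‖ := by
            rw [norm_smul, Real.norm_eq_abs, abs_of_pos hγ]
        _ ≤ ‖a - b‖ + γ * (Lf * ‖proxnf a - proxnf b‖) := by
            have := hlipR (proxnf a) (proxnf b)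
            nlinarith [hγ]
      -- note: rewriting hd inside norm on the left of h1's statement
    nlinarith [h1]
  -- gradient of the g-envelope
  have hq2 : ∀ T : ℝ, 1/(2*γ) * (2*T) = γ⁻¹ * T := by
    intro T; rw [one_div]; field_simp
  have henvg : ∀ a b : Euc p, moreauR g γ b - moreauR g γ a
      ≤ ⟪γ⁻¹ • (a - proxg a), b - a⟫_ℝ + 1/(2*γ) * ‖b - a‖^2 := by
    intro a b
    have hle : moreauR g γ b ≤ G a + 1/(2*γ) * ‖proxg a - b‖^2 := by
      have h := iInf_le (fun w : Euc p => g w + ((1/(2*γ) * ‖w - b‖^2 : ℝ) : EReal)) (proxg a)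
      have hm := moreau_eq_of_min g γ b _ (hproxg b).1
      rw [hG b, ← EReal.coe_add] at hm
      simp only [hG a, ← EReal.coe_add] at h
      rw [moreau] at hm
      rw [hm] at h
      rw [EReal.coe_le_coe_iff] at h
      rw [moreauR, moreau, hm, EReal.toReal_coe]
      exact h
    have hxb : ‖proxg a - b‖^2 = ‖proxg a - a‖^2 - 2*⟪proxg a - a, b - a⟫_ℝ + ‖b - a‖^2 := by
      have he : proxg a - b = (proxg a - a) - (b - a) := by module
      rw [he, norm_sub_sq_real]
    have hv : ⟪γ⁻¹ • (a - proxg a), b - a⟫_ℝ = - (γ⁻¹ * ⟪proxg a - a, b - a⟫_ℝ) := by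
      rw [real_inner_smul_left]
      have : (a - proxg a : Euc p) = -(proxg a - a) := by module
      rw [this, inner_neg_left]
      ring
    have hMa := hMg a
    have hqq := hq2 ⟪proxg a - a, b - a⟫_ℝ
    have hxb' : 1/(2*γ) * ‖proxg a - b‖^2
        = 1/(2*γ) * ‖proxg a - a‖^2 - γ⁻¹ * ⟪proxg a - a, b - a⟫_ℝ
          + 1/(2*γ) * ‖b - a‖^2 := by
      rw [hxb, ← hqq]; ring
    rw [hv]
    linarith [hle, hMa, hxb']
  have hvglip : ∀ a b : Euc p, ‖γ⁻¹ • (a - proxg a) - γ⁻¹ • (b - proxg b)‖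
      ≤ (2 * γ⁻¹) * ‖a - b‖ := by
    intro a b
    have he : γ⁻¹ • (a - proxg a) - γ⁻¹ • (b - proxg b)
        = γ⁻¹ • ((a - b) - (proxg a - proxg b)) := by module
    rw [he, norm_smul, Real.norm_eq_abs, abs_of_pos hγ0]
    have h1 : ‖(a - b) - (proxg a - proxg b)‖ ≤ ‖a - b‖ + ‖proxg a - proxg b‖ :=
      norm_sub_le _ _
    have h2 := hnonexp a b
    nlinarith [hγ0]
  have hgradg : ∀ s, HasGradientAt (fun s' => moreauR g γ s') (γ⁻¹ • (s - proxg s)) s :=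
    fun s => hasGradientAt_of_env _ (fun a => γ⁻¹ • (a - proxg a)) (1/(2*γ)) (2*γ⁻¹)
      (by positivity) (by positivity) henvg hvglip s
  -- gradient of the (-f)-envelope
  have hvnf : ∀ a : Euc p, γ⁻¹ • (a - proxnf a) = -f' (proxnf a) := by
    intro a
    have h := hfix a
    have h2 : a - proxnf a = -(γ • f' (proxnf a)) := by
      nth_rewrite 1 [h]
      module
    rw [h2, smul_neg, smul_smul, inv_mul_cancel₀ (ne_of_gt hγ), one_smul]
  have hgLf : 0 < 1 - γ * Lf := by linarith
  have henvnf : ∀ a b : Euc p,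
      moreauR (fun x => ((-f x : ℝ) : EReal)) γ b - moreauR (fun x => ((-f x : ℝ) : EReal)) γ a
      ≤ ⟪γ⁻¹ • (a - proxnf a), b - a⟫_ℝ + 1/(2*γ) * ‖b - a‖^2 := by
    intro a b
    have hle : -f (proxnf b) + 1/(2*γ) * ‖proxnf b - b‖^2
        ≤ -f (proxnf a) + 1/(2*γ) * ‖proxnf a - b‖^2 := (hproxnf b).1 (proxnf a)
    have hxb : ‖proxnf a - b‖^2
        = ‖proxnf a - a‖^2 - 2*⟪proxnf a - a, b - a⟫_ℝ + ‖b - a‖^2 := by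
      have he : proxnf a - b = (proxnf a - a) - (b - a) := by module
      rw [he, norm_sub_sq_real]
    have hv : ⟪γ⁻¹ • (a - proxnf a), b - a⟫_ℝ = - (γ⁻¹ * ⟪proxnf a - a, b - a⟫_ℝ) := by
      rw [real_inner_smul_left]
      have : (a - proxnf a : Euc p) = -(proxnf a - a) := by module
      rw [this, inner_neg_left]
      ring
    have hqq := hq2 ⟪proxnf a - a, b - a⟫_ℝ
    have hxb' : 1/(2*γ) * ‖proxnf a - b‖^2
        = 1/(2*γ) * ‖proxnf a - a‖^2 - γ⁻¹ * ⟪proxnf a - a, b - a⟫_ℝ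
          + 1/(2*γ) * ‖b - a‖^2 := by
      rw [hxb, ← hqq]; ring
    rw [hMnf a, hMnf b, hv]
    linarith [hle, hxb']
  have hvnflip : ∀ a b : Euc p, ‖γ⁻¹ • (a - proxnf a) - γ⁻¹ • (b - proxnf b)‖
      ≤ (Lf / (1 - γ * Lf)) * ‖a - b‖ := by
    intro a b
    rw [hvnf a, hvnf b]
    have he : (-f' (proxnf a)) - (-f' (proxnf b)) = -(f' (proxnf a) - f' (proxnf b)) := by
      module
    rw [he, norm_neg]
    have h1 := hlipR (proxnf a) (proxnf b)
    have h2 := hdbound a b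
    rw [div_mul_eq_mul_div, le_div_iff₀ hgLf]
    nlinarith [norm_nonneg (proxnf a - proxnf b), norm_nonneg (f' (proxnf a) - f' (proxnf b))]
  have hgradnf : ∀ s, HasGradientAt (fun s' => moreauR (fun x => ((-f x : ℝ) : EReal)) γ s')
      (γ⁻¹ • (s - proxnf s)) s :=
    fun s => hasGradientAt_of_env _ (fun a => γ⁻¹ • (a - proxnf a)) (1/(2*γ))
      (Lf / (1 - γ * Lf)) (by positivity) (by positivity) henvnf hvnflip s
  constructor
  · intro s
    have h := hasGradientAt_sub' _ _ _ _ s (hgradg s) (hgradnf s)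
    have he : γ⁻¹ • (s - proxg s) - γ⁻¹ • (s - proxnf s) = γ⁻¹ • (proxnf s - proxg s) := by
      module
    rwa [he] at h
  · intro s s'
    have hqc : ConvexOn ℝ Set.univ
        (fun z : Euc p => (γ⁻¹ - σf)/2 * ‖z‖^2 - (f z - σf/2 * ‖z‖^2)) := by
      have heq : (fun z : Euc p => (γ⁻¹ - σf)/2 * ‖z‖^2 - (f z - σf/2 * ‖z‖^2))
          = (fun z : Euc p => γ⁻¹/2 * ‖z‖^2 - f z) := by
        funext z; ring
      rw [heq]
      exact convexOn_quad_sub f f' hf Lf hLf hlipR γ⁻¹ (le_of_lt h1γ)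
    have hL : 0 < γ⁻¹ - σf := by
      have : σf ≤ Lf := le_trans (le_abs_self _) hσf
      linarith
    have hcoco := cocoercive (fun z => f z - σf/2 * ‖z‖^2) (fun z => f' z - σf • z)
      (fun z => hasGradientAt_sub_quad f f' hf σf z) hconvf (γ⁻¹ - σf) hL hqc
      (proxnf s) (proxnf s')
    have herw : f' (proxnf s) - σf • proxnf s - (f' (proxnf s') - σf • proxnf s')
        = (f' (proxnf s) - f' (proxnf s')) - σf • (proxnf s - proxnf s') := by module
    rw [herw] at hcoco
    have hmnf : σnf * ‖proxnf s - proxnf s'‖^2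
        ≤ -⟪f' (proxnf s) - f' (proxnf s'), proxnf s - proxnf s'⟫_ℝ := by
      have h := sigma_mono (fun z => -f z) (fun z => -(f' z))
        (fun z => hasGradientAt_neg f (f' z) z (hf z)) σnf hconvnf (proxnf s) (proxnf s')
      have heq : -f' (proxnf s) - -f' (proxnf s')
          = -(f' (proxnf s) - f' (proxnf s')) := by module
      rw [heq, inner_neg_left] at h
      exact h
    have hcore := bounds_core γ σf σnf Lf hγ hLf hσf hσnf hγL
      (s - s') (proxg s - proxg s') (proxnf s - proxnf s')
      (f' (proxnf s) - f' (proxnf s'))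
      ((pow_nonneg (norm_nonneg _) 2).trans (hfirm s s')) (hxle s s')
      (hdshift s s') hmnf hcoco
    have hABe : γ⁻¹ • (proxnf s - proxg s) - γ⁻¹ • (proxnf s' - proxg s')
        = γ⁻¹ • ((proxnf s - proxnf s') - (proxg s - proxg s')) := by module
    rw [hABe, real_inner_smul_left, inner_sub_left]
    exact hcore
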